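/- arXiv:2602.05119 — 2 statements merged into one kernel-verified Lean document; each statement's English description precedes it below -/
import Mathlib

section
/- If x* minimizes v over [0,1]^d, then every y in the support of P_{x*} minimizes Q over {0,1}^d. -/
/-- if `x*` minimizes the multilinear extension `v` over `[0,1]^d`, then every
`y` in the support of `P_{x*}` (i.e. with positive product-Bernoulli probability) minimizes
`Q` over `{0,1}^d`. -/
theorem support_of_minimizer_minimizes (d : ℕ) (Q : (Fin d → Bool) → ℝ)
    (v : (Fin d → ℝ) → ℝ)
    (hv : ∀ x, v x = ∑ y : Fin d → Bool, Q y * ∏ i, (if y i then x i else 1 - x i))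
    (xstar : Fin d → ℝ) (hxstar : ∀ i, xstar i ∈ Set.Icc (0:ℝ) 1)
    (hmin : ∀ x : Fin d → ℝ, (∀ i, x i ∈ Set.Icc (0:ℝ) 1) → v xstar ≤ v x)
    (y : Fin d → Bool)
    (hy : 0 < ∏ i, (if y i then xstar i else 1 - xstar i)) :
    ∀ y' : Fin d → Bool, Q y ≤ Q y' := by
  intro y'
  set p : (Fin d → Bool) → ℝ := fun z => ∏ i, (if z i then xstar i else 1 - xstar i) with hp
  have hpnn : ∀ z, 0 ≤ p z := by
    intro z
    apply Finset.prod_nonneg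
    intro i _
    rcases hxstar i with ⟨h0, h1⟩
    by_cases h : z i <;> simp [h] <;> linarith
  have hpsum : ∑ z : Fin d → Bool, p z = 1 := by
    have h := Finset.prod_univ_sum (fun _ : Fin d => (Finset.univ : Finset Bool))
      (fun i b => if b then xstar i else 1 - xstar i)
    rw [Fintype.piFinset_univ] at h
    have h2 : ∀ i : Fin d, (∑ b : Bool, if b then xstar i else 1 - xstar i) = 1 := by
      intro i; simp
    rw [Finset.prod_congr rfl fun i _ => h2 i] at h
    simpa using h.symm
  have hvert : ∀ z : Fin d → Bool, v (fun i => if z i then 1 else 0) = Q z := by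
    intro z
    rw [hv]
    have key : ∀ w : Fin d → Bool,
        (∏ i, (if w i then (if z i then (1:ℝ) else 0) else 1 - (if z i then (1:ℝ) else 0)))
        = if w = z then 1 else 0 := by
      intro w
      have h1 : ∀ i, (if w i then (if z i then (1:ℝ) else 0) else 1 - (if z i then (1:ℝ) else 0))
          = if w i = z i then 1 else 0 := by
        intro i; cases hw : w i <;> cases hz : z i <;> simp
      rw [Finset.prod_congr rfl fun i _ => h1 i, Finset.prod_boole]
      simp [funext_iff]
    simp only [key]
    simp
  have hvx : v xstar = ∑ z : Fin d → Bool, Q z * p z := hv xstar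
  have hle : ∀ z : Fin d → Bool, v xstar ≤ Q z := by
    intro z
    rw [← hvert z]
    apply hmin
    intro i; by_cases h : z i <;> simp [h]
  have hzero : ∑ z : Fin d → Bool, p z * (Q z - v xstar) = 0 := by
    have expand : ∑ z : Fin d → Bool, p z * (Q z - v xstar)
        = (∑ z : Fin d → Bool, Q z * p z) - (∑ z : Fin d → Bool, p z) * v xstar := by
      rw [Finset.sum_mul, ← Finset.sum_sub_distrib]
      apply Finset.sum_congr rfl
      intro z _; ring
    rw [expand, hpsum, ← hvx]
    ring
  have hterm : p y * (Q y - v xstar) = 0 := by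
    have := (Finset.sum_eq_zero_iff_of_nonneg (fun z _ =>
      mul_nonneg (hpnn z) (sub_nonneg.mpr (hle z)))).mp hzero y (Finset.mem_univ y)
    exact this
  have hpy : 0 < p y := hy
  have hQy : Q y = v xstar := by
    rcases mul_eq_zero.mp hterm with h | h
    · exact absurd h (ne_of_gt hpy)
    · linarith [sub_eq_zero.mp h]
  rw [hQy]
  exact hle y'
end

section
/- Conversely, if ε₁,...,ε_d are real random variables such that for all x ∈ (0,1)^d the vector (1{σ⁻¹(x_i) − ε_i ≥ 0})_{i=1}^d is distributed as P_x (product of Bernoulli(x_i)), where σ is a well-invertible distribution, then ε₁,...,ε_d are i.i.d. with common distribution σ. -/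
open MeasureTheory

/-- The Bernoulli(p) measure on `Bool`. -/
noncomputable def bernoulliMeasure (p : ℝ) : Measure Bool :=
  ENNReal.ofReal p • Measure.dirac true + ENNReal.ofReal (1 - p) • Measure.dirac false

instance bernoulliMeasure_finite (p : ℝ) : IsFiniteMeasure (bernoulliMeasure p) := by
  constructor
  simp only [bernoulliMeasure, Measure.add_apply, Measure.smul_apply, smul_eq_mul,
    measure_univ, mul_one]
  exact ENNReal.add_lt_top.mpr ⟨ENNReal.ofReal_lt_top, ENNReal.ofReal_lt_top⟩

lemma bernoulliMeasure_true (p : ℝ) : bernoulliMeasure p {true} = ENNReal.ofReal p := by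
  simp [bernoulliMeasure, Measure.dirac_apply]

lemma bernoulliMeasure_univ (p : ℝ) (h0 : 0 ≤ p) (h1 : p ≤ 1) :
    bernoulliMeasure p Set.univ = 1 := by
  simp only [bernoulliMeasure, Measure.add_apply, Measure.smul_apply, smul_eq_mul,
    measure_univ, mul_one]
  rw [← ENNReal.ofReal_add h0 (by linarith)]
  norm_num

lemma prod_diff_le {ι : Type*} (δ : ℝ) (a b : ι → ℝ) (s : Finset ι) :
    (∀ i ∈ s, 0 ≤ a i ∧ a i ≤ 1) → (∀ i ∈ s, 0 ≤ b i ∧ b i ≤ 1) →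
    (∀ i ∈ s, |a i - b i| ≤ δ) →
    |(∏ i ∈ s, a i) - ∏ i ∈ s, b i| ≤ s.card * δ := by
  classical
  induction s using Finset.induction_on with
  | empty => intro _ _ _; simp
  | @insert j s hj ih =>
    intro ha hb hd
    have hδ : 0 ≤ δ := le_trans (abs_nonneg _) (hd j (Finset.mem_insert_self j s))
    rw [Finset.prod_insert hj, Finset.prod_insert hj, Finset.card_insert_of_notMem hj]
    have hpa0 : 0 ≤ ∏ i ∈ s, a i :=
      Finset.prod_nonneg fun i hi => (ha i (Finset.mem_insert_of_mem hi)).1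
    have hpa1 : ∏ i ∈ s, a i ≤ 1 :=
      Finset.prod_le_one (fun i hi => (ha i (Finset.mem_insert_of_mem hi)).1)
        (fun i hi => (ha i (Finset.mem_insert_of_mem hi)).2)
    have hbj := hb j (Finset.mem_insert_self j s)
    have ihs := ih (fun i hi => ha i (Finset.mem_insert_of_mem hi))
      (fun i hi => hb i (Finset.mem_insert_of_mem hi))
      (fun i hi => hd i (Finset.mem_insert_of_mem hi))
    have t1 : |a j - b j| * |∏ i ∈ s, a i| ≤ δ * 1 :=
      mul_le_mul (hd j (Finset.mem_insert_self j s)) (abs_le.mpr ⟨by linarith, hpa1⟩)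
        (abs_nonneg _) hδ
    have t2 : |b j| * |(∏ i ∈ s, a i) - ∏ i ∈ s, b i| ≤ 1 * (s.card * δ) :=
      mul_le_mul (abs_le.mpr ⟨by linarith [hbj.1], hbj.2⟩) ihs (abs_nonneg _) zero_le_one
    calc |a j * ∏ i ∈ s, a i - b j * ∏ i ∈ s, b i|
        = |(a j - b j) * ∏ i ∈ s, a i + b j * ((∏ i ∈ s, a i) - ∏ i ∈ s, b i)| := by ring_nf
      _ ≤ |(a j - b j) * ∏ i ∈ s, a i| + |b j * ((∏ i ∈ s, a i) - ∏ i ∈ s, b i)| := abs_add_le _ _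
      _ = |a j - b j| * |∏ i ∈ s, a i| + |b j| * |(∏ i ∈ s, a i) - ∏ i ∈ s, b i| := by
          rw [abs_mul, abs_mul]
      _ ≤ δ * 1 + 1 * (s.card * δ) := add_le_add t1 t2
      _ = (↑(s.card + 1)) * δ := by push_cast; ring

/-- conversely, if for every `x ∈ (0,1)^d` the thresholded vector
`(1{σinv(x i) − ε i ≥ 0})_i` has law `⊗ᵢ Bernoulli(x i)`, where `σ` is well-invertible,
then the `ε i` are i.i.d. with common distribution `σ`. -/
theorem threshold_law_implies_iid (d : ℕ)
    (σ : Measure ℝ) [IsProbabilityMeasure σ]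
    (F σinv : ℝ → ℝ) (hF : ∀ z, F z = (σ (Set.Iic z)).toReal)
    (hFcont : Continuous F)
    (supp : Set ℝ) (hsupp : supp = {z : ℝ | ∀ U ∈ nhds z, 0 < σ U})
    (hmonoF : StrictMonoOn F (interior supp))
    (hinv : ∀ x ∈ Set.Ioo (0:ℝ) 1, F (σinv x) = x)
    (hinv2 : ∀ z ∈ interior supp, σinv (F z) = z)
    {Ω : Type*} [MeasurableSpace Ω] (ℙ : Measure Ω) [IsProbabilityMeasure ℙ]
    (ε : Fin d → Ω → ℝ) (hmeas : ∀ i, Measurable (ε i))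
    (hlaw : ∀ x : Fin d → ℝ, (∀ i, x i ∈ Set.Ioo (0:ℝ) 1) →
      ℙ.map (fun ω i => decide (0 ≤ σinv (x i) - ε i ω)) =
        Measure.pi (fun i => bernoulliMeasure (x i))) :
    (∀ i, ℙ.map (ε i) = σ) ∧
      ProbabilityTheory.iIndepFun ε ℙ := by
  classical
  have Fmono : Monotone F := by
    intro z z' h
    rw [hF, hF]
    exact ENNReal.toReal_mono (measure_ne_top σ _) (measure_mono (Set.Iic_subset_Iic.2 h))
  have F0 : ∀ z, 0 ≤ F z := fun z => (hF z) ▸ ENNReal.toReal_nonneg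
  have F1 : ∀ z, F z ≤ 1 := by
    intro z
    rw [hF]
    have := prob_le_one (μ := σ) (s := Set.Iic z)
    simpa using ENNReal.toReal_mono ENNReal.one_ne_top this
  have keyA : ∀ s ∈ Set.Ioo (0:ℝ) 1, ∀ z : ℝ, s < F z → σinv s < z := by
    intro s hs z hlt
    by_contra h
    push_neg at h
    have := Fmono h
    rw [hinv s hs] at this
    linarith
  have keyB : ∀ u ∈ Set.Ioo (0:ℝ) 1, ∀ z : ℝ, F z < u → z < σinv u := by
    intro u hu z hlt
    by_contra h
    push_neg at h
    have := Fmono h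
    rw [hinv u hu] at this
    linarith
  -- Step 1: law on threshold boxes
  have L0 : ∀ (S : Finset (Fin d)) (x : Fin d → ℝ), (∀ i, x i ∈ Set.Ioo (0:ℝ) 1) →
      ℙ (⋂ i ∈ S, {ω | ε i ω ≤ σinv (x i)}) = ENNReal.ofReal (∏ i ∈ S, x i) := by
    intro S x hx
    set f : Ω → (Fin d → Bool) := fun ω i => decide (0 ≤ σinv (x i) - ε i ω) with hfdef
    have hfm : Measurable f := by
      apply measurable_pi_lambda
      intro i
      apply measurable_to_countable'
      intro b
      cases b
      · have : (fun ω => f ω i) ⁻¹' {false} = ε i ⁻¹' Set.Ioi (σinv (x i)) := by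
          ext ω
          simp only [Set.mem_preimage, Set.mem_singleton_iff, Set.mem_Ioi, hfdef,
            decide_eq_false_iff_not, not_le]
          constructor <;> intro h <;> linarith
        rw [this]
        exact (hmeas i) measurableSet_Ioi
      · have : (fun ω => f ω i) ⁻¹' {true} = ε i ⁻¹' Set.Iic (σinv (x i)) := by
          ext ω
          simp only [Set.mem_preimage, Set.mem_singleton_iff, Set.mem_Iic, hfdef,
            decide_eq_true_eq]
          constructor <;> intro h <;> linarith
        rw [this]
        exact (hmeas i) measurableSet_Iic
    set g : Fin d → Set Bool := fun j => if j ∈ S then {true} else Set.univ with hgdef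
    have hgm : ∀ j, MeasurableSet (g j) := by
      intro j
      by_cases h : j ∈ S <;> simp [hgdef, h]
    have hpre : f ⁻¹' Set.univ.pi g = ⋂ i ∈ S, {ω | ε i ω ≤ σinv (x i)} := by
      ext ω
      simp only [Set.mem_preimage, Set.mem_univ_pi, Set.mem_iInter, Set.mem_setOf_eq]
      constructor
      · intro h i hi
        have := h i
        simp only [hgdef, hi, if_true, Set.mem_singleton_iff, hfdef, decide_eq_true_eq] at this
        linarith
      · intro h j
        by_cases hj : j ∈ S
        · simp only [hgdef, hj, if_true, Set.mem_singleton_iff, hfdef, decide_eq_true_eq]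
          linarith [h j hj]
        · simp [hgdef, hj]
    calc ℙ (⋂ i ∈ S, {ω | ε i ω ≤ σinv (x i)})
        = ℙ.map f (Set.univ.pi g) := by
          rw [Measure.map_apply hfm (MeasurableSet.univ_pi hgm), hpre]
      _ = Measure.pi (fun i => bernoulliMeasure (x i)) (Set.univ.pi g) := by
          rw [hlaw x hx]
      _ = ∏ j, bernoulliMeasure (x j) (g j) := Measure.pi_pi _ _
      _ = ∏ j, (if j ∈ S then ENNReal.ofReal (x j) else 1) := by
          refine Finset.prod_congr rfl fun j _ => ?_
          by_cases h : j ∈ S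
          · simp [hgdef, h, bernoulliMeasure_true]
          · simp only [hgdef, h, if_false]
            exact bernoulliMeasure_univ (x j) (hx j).1.le (hx j).2.le
      _ = ∏ j ∈ S, ENNReal.ofReal (x j) := by
          rw [Finset.prod_ite_mem Finset.univ S, Finset.univ_inter]
      _ = ENNReal.ofReal (∏ i ∈ S, x i) :=
          (ENNReal.ofReal_prod_of_nonneg fun i _ => (hx i).1.le).symm
  -- Step 2: joint CDF formula
  have L : ∀ (S : Finset (Fin d)) (t : Fin d → ℝ),
      ℙ (⋂ i ∈ S, {ω | ε i ω ≤ t i}) = ENNReal.ofReal (∏ i ∈ S, F (t i)) := by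
    intro S t
    set A := ⋂ i ∈ S, {ω | ε i ω ≤ t i} with hAdef
    set P := ∏ i ∈ S, F (t i) with hPdef
    have hP0 : 0 ≤ P := Finset.prod_nonneg fun i _ => F0 _
    have hAne : ℙ A ≠ ⊤ := measure_ne_top ℙ A
    set gA := (ℙ A).toReal with hgAdef
    have hgA0 : 0 ≤ gA := ENNReal.toReal_nonneg
    have hup : ∀ δ : ℝ, 0 < δ → δ < 1/2 → gA ≤ P + S.card * δ := by
      intro δ hδ0 hδh
      set v : Fin d → ℝ := fun i => min (F (t i) + δ) (1 - δ) with hvdef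
      have hv : ∀ i, v i ∈ Set.Ioo (0:ℝ) 1 :=
        fun i => ⟨lt_min (by linarith [F0 (t i)]) (by linarith),
          lt_of_le_of_lt (min_le_right _ _) (by linarith)⟩
      set Sd := S.filter (fun i => F (t i) < 1 - δ) with hSddef
      have hsub : A ⊆ ⋂ i ∈ Sd, {ω | ε i ω ≤ σinv (v i)} := by
        intro ω hω
        simp only [hAdef, Set.mem_iInter, Set.mem_setOf_eq] at hω ⊢
        intro i hi
        have hiS : i ∈ S := (Finset.mem_filter.1 hi).1
        have hFi : F (t i) < 1 - δ := (Finset.mem_filter.1 hi).2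
        have h1 : F (t i) < v i := lt_min (by linarith) hFi
        have h2 : t i < σinv (v i) := keyB (v i) (hv i) (t i) h1
        exact le_of_lt (lt_of_le_of_lt (hω i hiS) h2)
      have hm := measure_mono (μ := ℙ) hsub
      rw [L0 Sd v hv] at hm
      have h1 : gA ≤ ∏ i ∈ Sd, v i := by
        have := ENNReal.toReal_mono ENNReal.ofReal_ne_top hm
        rwa [ENNReal.toReal_ofReal (Finset.prod_nonneg fun i _ => (hv i).1.le)] at this
      have h2 : ∏ i ∈ Sd, v i = ∏ i ∈ S, (if F (t i) < 1 - δ then v i else 1) :=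
        Finset.prod_filter _ _
      have h3 : |(∏ i ∈ S, (if F (t i) < 1 - δ then v i else 1)) - P| ≤ S.card * δ := by
        apply prod_diff_le
        · intro i _
          by_cases h : F (t i) < 1 - δ
          · simp only [h, if_true]
            exact ⟨(hv i).1.le, (hv i).2.le⟩
          · simp [h]
        · exact fun i _ => ⟨F0 _, F1 _⟩
        · intro i _
          by_cases h : F (t i) < 1 - δ
          · simp only [h, if_true]
            have hvu : v i ≤ F (t i) + δ := min_le_left _ _
            have hvl : F (t i) < v i := lt_min (by linarith) h
            rw [abs_le]
            constructor <;> linarith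
          · push_neg at h
            simp only [h.not_gt, if_false]
            rw [abs_le]
            constructor <;> [linarith [F1 (t i)]; linarith [F0 (t i)]]
      rw [abs_le] at h3
      rw [h2] at h1
      linarith [h3.1]
    have hlo : ∀ δ : ℝ, 0 < δ → δ < 1/2 → P - (S.card + 1) * δ ≤ gA := by
      intro δ hδ0 hδh
      have hcδ : (0:ℝ) ≤ S.card * δ := mul_nonneg (Nat.cast_nonneg _) hδ0.le
      by_cases hex : ∃ i ∈ S, F (t i) ≤ δ
      · obtain ⟨i, hiS, hFi⟩ := hex
        have hPδ : P ≤ δ := by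
          calc P = F (t i) * ∏ j ∈ S.erase i, F (t j) :=
              (Finset.mul_prod_erase S _ hiS).symm
            _ ≤ δ * 1 := mul_le_mul hFi
                (Finset.prod_le_one (fun j _ => F0 _) (fun j _ => F1 _))
                (Finset.prod_nonneg fun j _ => F0 _) hδ0.le
            _ = δ := mul_one δ
        nlinarith
      · push_neg at hex
        set a : Fin d → ℝ := fun i => max (F (t i) - δ) (δ/2) with hadef
        have ha : ∀ i, a i ∈ Set.Ioo (0:ℝ) 1 :=
          fun i => ⟨lt_max_iff.2 (Or.inr (by linarith)),
            max_lt (by linarith [F1 (t i)]) (by linarith)⟩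
        have hsub : (⋂ i ∈ S, {ω | ε i ω ≤ σinv (a i)}) ⊆ A := by
          intro ω hω
          simp only [hAdef, Set.mem_iInter, Set.mem_setOf_eq] at hω ⊢
          intro i hi
          have hai : a i < F (t i) := max_lt (by linarith) (by linarith [hex i hi])
          have h2 : σinv (a i) < t i := keyA (a i) (ha i) (t i) hai
          exact le_trans (hω i hi) h2.le
        have hm := measure_mono (μ := ℙ) hsub
        rw [L0 S a ha] at hm
        have h1 : ∏ i ∈ S, a i ≤ gA := by
          have := ENNReal.toReal_mono hAne hm
          rwa [ENNReal.toReal_ofReal (Finset.prod_nonneg fun i _ => (ha i).1.le)] at this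
        have h3 : |(∏ i ∈ S, a i) - P| ≤ S.card * δ := by
          apply prod_diff_le
          · exact fun i _ => ⟨(ha i).1.le, (ha i).2.le⟩
          · exact fun i _ => ⟨F0 _, F1 _⟩
          · intro i hi
            have hl : F (t i) - δ ≤ a i := le_max_left _ _
            have hu : a i < F (t i) := max_lt (by linarith) (by linarith [hex i hi])
            rw [abs_le]
            constructor <;> linarith
        rw [abs_le] at h3
        linarith [h3.2]
    have hgAP : gA = P := by
      have habs : ∀ η : ℝ, 0 < η → |gA - P| ≤ η := by
        intro η hη
        set δ := min (η / (S.card + 1)) (1/4) with hδdef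
        have hc1 : (0:ℝ) < S.card + 1 := by positivity
        have hδ0 : 0 < δ := lt_min (div_pos hη hc1) (by norm_num)
        have hδh : δ < 1/2 := lt_of_le_of_lt (min_le_right _ _) (by norm_num)
        have h1 := hup δ hδ0 hδh
        have h2 := hlo δ hδ0 hδh
        have h4 : ((S.card : ℝ) + 1) * δ ≤ η := by
          calc ((S.card : ℝ) + 1) * δ ≤ ((S.card : ℝ) + 1) * (η / (S.card + 1)) :=
              mul_le_mul_of_nonneg_left (min_le_left _ _) hc1.le
            _ = η := by field_simp
        have h5 : (S.card : ℝ) * δ ≤ ((S.card : ℝ) + 1) * δ := by nlinarith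
        rw [abs_le]
        constructor <;> linarith
      by_contra hne
      have hpos : 0 < |gA - P| := abs_pos.2 (sub_ne_zero.2 hne)
      have := habs (|gA - P| / 2) (by linarith)
      linarith
    calc ℙ A = ENNReal.ofReal gA := (ENNReal.ofReal_toReal hAne).symm
      _ = ENNReal.ofReal P := by rw [hgAP]
  -- marginals
  have marg : ∀ i (z : ℝ), ℙ {ω | ε i ω ≤ z} = ENNReal.ofReal (F z) := by
    intro i z
    have := L {i} (fun _ => z)
    simpa using this
  have part1 : ∀ i, ℙ.map (ε i) = σ := by
    intro i
    haveI : IsProbabilityMeasure (ℙ.map (ε i)) :=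
      Measure.isProbabilityMeasure_map (hmeas i).aemeasurable
    refine Measure.ext_of_Iic (ℙ.map (ε i)) σ (fun a => ?_)
    rw [Measure.map_apply (hmeas i) measurableSet_Iic]
    have hpre : ε i ⁻¹' Set.Iic a = {ω | ε i ω ≤ a} := rfl
    rw [hpre, marg i a, ← ENNReal.ofReal_toReal (measure_ne_top σ (Set.Iic a)), ← hF a]
  refine ⟨part1, ?_⟩
  rw [ProbabilityTheory.iIndepFun_iff_iIndep]
  apply ProbabilityTheory.iIndepSets.iIndep
    (fun i => (hmeas i).comap_le)
    (fun i => Set.range (fun r : ℝ => ε i ⁻¹' Set.Iic r))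
  · rintro i s ⟨rs, rfl⟩ u ⟨ru, rfl⟩ _
    exact ⟨min rs ru, by simp only [← Set.preimage_inter, Set.Iic_inter_Iic]⟩
  · intro i
    conv_lhs => rw [(inferInstance : BorelSpace ℝ).measurable_eq, borel_eq_generateFrom_Iic ℝ]
    rw [MeasurableSpace.comap_generateFrom]
    congr 1
    rw [← Set.range_comp]
    rfl
  · rw [ProbabilityTheory.iIndepSets_iff]
    intro s f hf
    have hf' : ∀ i ∈ s, ∃ r : ℝ, ε i ⁻¹' Set.Iic r = f i := by
      intro i hi
      exact hf i hi
    choose! t ht using hf'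
    have heq : ∀ i ∈ s, f i = {ω | ε i ω ≤ t i} := fun i hi => (ht i hi).symm
    calc ℙ (⋂ i ∈ s, f i) = ℙ (⋂ i ∈ s, {ω | ε i ω ≤ t i}) := by
          congr 1
          exact Set.iInter₂_congr heq
      _ = ENNReal.ofReal (∏ i ∈ s, F (t i)) := L s t
      _ = ∏ i ∈ s, ENNReal.ofReal (F (t i)) :=
          ENNReal.ofReal_prod_of_nonneg (fun i _ => F0 _)
      _ = ∏ i ∈ s, ℙ (f i) := Finset.prod_congr rfl fun i hi => by
          rw [heq i hi, marg]
end
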